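/- Let G be a group acting on a set X and let x, y ∈ X with Gx ≠ Gy. There exists a non-bijective G-equivariant transformation τ ∈ End_G(X) \ Aut_G(X) with τ(x) = y if and only if G_x ≤ G_y (the stabilizer of x is a subgroup of the stabilizer of y). -/

import Mathlib

/-- The monoid of all `G`-equivariant transformations of `X`, as a submonoid of
`Function.End X` (composition of functions). -/
def gEnd (G X : Type*) [Group G] [MulAction G X] : Submonoid (Function.End X) where
  carrier := {f | ∀ (g : G) (x : X), f (g • x) = g • f x}
  one_mem' := fun _ _ => rfl
  mul_mem' := fun {f₁ f₂} h₁ h₂ g x => by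
    show f₁ (f₂ (g • x)) = g • f₁ (f₂ x)
    rw [h₂, h₁]

/-- The group of all bijective `G`-equivariant transformations of `X`, as a subgroup of
`Equiv.Perm X`. -/
def gAut (G X : Type*) [Group G] [MulAction G X] : Subgroup (Equiv.Perm X) where
  carrier := {f | ∀ (g : G) (x : X), f (g • x) = g • f x}
  one_mem' := fun _ _ => rfl
  mul_mem' := fun {f₁ f₂} h₁ h₂ g x => by
    show f₁ (f₂ (g • x)) = g • f₁ (f₂ x)
    rw [h₂, h₁]
  inv_mem' := fun {f} hf g x => f.injective (by
    show f (f.symm (g • x)) = f (g • f.symm x)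
    rw [Equiv.apply_symm_apply, hf, Equiv.apply_symm_apply])

/-- For `x, y` in distinct orbits, there is a non-bijective
`τ ∈ End_G(X) \ Aut_G(X)` with `τ(x) = y` iff `G_x ≤ G_y`. -/
theorem stmt4 {G X : Type*} [Group G] [MulAction G X] (x y : X)
    (hxy : MulAction.orbit G x ≠ MulAction.orbit G y) :
    (∃ τ ∈ gEnd G X, ¬Function.Bijective τ ∧ τ x = y) ↔
      MulAction.stabilizer G x ≤ MulAction.stabilizer G y := by
  constructor
  · rintro ⟨τ, hτ, -, hτx⟩ g hg
    have hg' : g • x = x := hg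
    have := hτ g x
    rw [hg', hτx] at this
    exact MulAction.mem_stabilizer_iff.mpr this.symm
  · intro hst
    classical
    set τ : X → X := fun z =>
      if h : z ∈ MulAction.orbit G x then
        (MulAction.mem_orbit_iff.mp h).choose • y else z with hτdef
    have key : ∀ (z : X) (h : z ∈ MulAction.orbit G x) (g : G), g • x = z → τ z = g • y := by
      intro z h g hg
      have hc : (MulAction.mem_orbit_iff.mp h).choose • x = z :=
        (MulAction.mem_orbit_iff.mp h).choose_spec
      have : g⁻¹ * (MulAction.mem_orbit_iff.mp h).choose ∈ MulAction.stabilizer G x := by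
        rw [MulAction.mem_stabilizer_iff, mul_smul, hc, ← hg, inv_smul_smul]
      have h2 : (g⁻¹ * (MulAction.mem_orbit_iff.mp h).choose) • y = y := hst this
      rw [mul_smul] at h2
      have h3 : (MulAction.mem_orbit_iff.mp h).choose • y = g • y := by
        conv_rhs => rw [← h2]
        rw [smul_inv_smul]
      simp only [hτdef, dif_pos h, h3]
    have hmem : τ ∈ gEnd G X := by
      intro g z
      by_cases h : z ∈ MulAction.orbit G x
      · obtain ⟨k, hk⟩ := MulAction.mem_orbit_iff.mp h
        have h1 : g • z ∈ MulAction.orbit G x :=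
          MulAction.mem_orbit_iff.mpr ⟨g * k, by rw [mul_smul, hk]⟩
        rw [key (g • z) h1 (g * k) (by rw [mul_smul, hk]), key z h k hk, mul_smul]
      · have h1 : g • z ∉ MulAction.orbit G x := by
          intro hc
          obtain ⟨k, hk⟩ := MulAction.mem_orbit_iff.mp hc
          exact h (MulAction.mem_orbit_iff.mpr
            ⟨g⁻¹ * k, by rw [mul_smul, hk, inv_smul_smul]⟩)
        show τ (g • z) = g • τ z
        rw [hτdef]
        simp only [dif_neg h, dif_neg h1]
    refine ⟨τ, hmem, ?_, key x (MulAction.mem_orbit_self x) 1 (one_smul G x) |>.trans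
      (one_smul G y)⟩
    intro hbij
    obtain ⟨z, hz⟩ := hbij.surjective x
    by_cases h : z ∈ MulAction.orbit G x
    · obtain ⟨k, hk⟩ := MulAction.mem_orbit_iff.mp h
      rw [key z h k hk] at hz
      exact hxy (MulAction.orbit_eq_iff.mpr (MulAction.mem_orbit_iff.mpr ⟨k, hz⟩))
    · rw [hτdef] at hz
      simp only [dif_neg h] at hz
      subst hz
      exact h (MulAction.mem_orbit_self z)
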